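/- Let λ > 0, n ≥ 1 and integers 1 ≤ i < j ≤ n. Define Ψᵢⱼ⁽ⁿ⁾ = √( sinh((n+1-j)λ)·sinh(iλ) / (sinh((n+1-i)λ)·sinh(jλ)) ). Then 0 < Ψᵢⱼ⁽ⁿ⁾ < e^{-(j-i)λ}. -/

import Mathlib

lemma sinh_ratio_lt {a b : ℝ} (ha : 0 < a) (hab : a < b) :
    Real.sinh a / Real.sinh b < Real.exp (a - b) := by
  have hb : 0 < Real.sinh b := Real.sinh_pos_iff.mpr (ha.trans hab)
  rw [div_lt_iff₀ hb, Real.sinh_eq, Real.sinh_eq, Real.exp_sub]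
  have he : Real.exp (a - b) < Real.exp (b - a) := Real.exp_lt_exp.mpr (by linarith)
  rw [Real.exp_sub, Real.exp_sub] at he
  have hpa := Real.exp_pos a
  have hpb := Real.exp_pos b
  have h1 : Real.exp (-a) = 1 / Real.exp a := by rw [Real.exp_neg]; ring
  have h2 : Real.exp (-b) = 1 / Real.exp b := by rw [Real.exp_neg]; ring
  rw [h1, h2]
  rw [div_lt_div_iff₀ hpb hpa] at he
  field_simp
  nlinarith [mul_pos hpa hpb]

theorem psi_bounds (l : ℝ) (hl : 0 < l) (n i j : ℕ) (hn : 1 ≤ n)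
    (hi : 1 ≤ i) (hij : i < j) (hj : j ≤ n) :
    0 < Real.sqrt (Real.sinh (((n : ℝ) + 1 - j) * l) * Real.sinh ((i : ℝ) * l) /
          (Real.sinh (((n : ℝ) + 1 - i) * l) * Real.sinh ((j : ℝ) * l))) ∧
      Real.sqrt (Real.sinh (((n : ℝ) + 1 - j) * l) * Real.sinh ((i : ℝ) * l) /
          (Real.sinh (((n : ℝ) + 1 - i) * l) * Real.sinh ((j : ℝ) * l))) <
        Real.exp (-((j : ℝ) - i) * l) := by
  have hiR : (1 : ℝ) ≤ (i : ℝ) := by exact_mod_cast hi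
  have hijR : (i : ℝ) < (j : ℝ) := by exact_mod_cast hij
  have hjR : (j : ℝ) ≤ (n : ℝ) := by exact_mod_cast hj
  have h1 : 0 < ((n : ℝ) + 1 - j) * l := by
    apply mul_pos _ hl; linarith
  have h2 : ((n : ℝ) + 1 - j) * l < ((n : ℝ) + 1 - i) * l := by
    apply mul_lt_mul_of_pos_right _ hl; linarith
  have h3 : 0 < (i : ℝ) * l := by positivity
  have h4 : (i : ℝ) * l < (j : ℝ) * l := mul_lt_mul_of_pos_right hijR hl
  have s1 := Real.sinh_pos_iff.mpr h1
  have s2 := Real.sinh_pos_iff.mpr (h1.trans h2)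
  have s3 := Real.sinh_pos_iff.mpr h3
  have s4 := Real.sinh_pos_iff.mpr (h3.trans h4)
  have hq : 0 < Real.sinh (((n : ℝ) + 1 - j) * l) * Real.sinh ((i : ℝ) * l) /
      (Real.sinh (((n : ℝ) + 1 - i) * l) * Real.sinh ((j : ℝ) * l)) := by positivity
  refine ⟨Real.sqrt_pos.mpr hq, ?_⟩
  rw [Real.sqrt_lt' (Real.exp_pos _)]
  have r1 := sinh_ratio_lt h1 h2
  have r2 := sinh_ratio_lt h3 h4
  have e1 : ((n : ℝ) + 1 - j) * l - ((n : ℝ) + 1 - i) * l = -((j : ℝ) - i) * l := by ring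
  have e2 : (i : ℝ) * l - (j : ℝ) * l = -((j : ℝ) - i) * l := by ring
  rw [e1] at r1
  rw [e2] at r2
  have key : Real.sinh (((n : ℝ) + 1 - j) * l) * Real.sinh ((i : ℝ) * l) /
      (Real.sinh (((n : ℝ) + 1 - i) * l) * Real.sinh ((j : ℝ) * l)) =
      (Real.sinh (((n : ℝ) + 1 - j) * l) / Real.sinh (((n : ℝ) + 1 - i) * l)) *
      (Real.sinh ((i : ℝ) * l) / Real.sinh ((j : ℝ) * l)) := by
    rw [div_mul_div_comm]
  rw [key, sq]
  have q1 : 0 < Real.sinh (((n : ℝ) + 1 - j) * l) / Real.sinh (((n : ℝ) + 1 - i) * l) :=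
    by positivity
  have q2 : 0 < Real.sinh ((i : ℝ) * l) / Real.sinh ((j : ℝ) * l) := by positivity
  exact mul_lt_mul'' r1 r2 q1.le q2.le
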